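/- Let L be a non-quasianalytic log-convex weight sequence with L_0 = 1, and set α_k := (k!L_k)^{1/k}/k. Then for s ≤ k, α_s/α_k ≤ 2e; and consequently, since Σ 1/(kα_k) < ∞, the quantity (log k)/α_k = k·log(k)/(k!L_k)^{1/k} is bounded in k. -/

import Mathlib

open Real Finset

private lemma aux_pow_mono (L : ℕ → ℝ) (hpos : ∀ k, 0 < L k) (hL0 : L 0 = 1)
    (hlc : ∀ k, 1 ≤ k → (L k) ^ 2 ≤ L (k - 1) * L (k + 1)) :
    ∀ k : ℕ, (L k) ^ (k + 1) ≤ (L (k + 1)) ^ k := by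
  intro k
  induction k with
  | zero => simp [hL0]
  | succ n ih =>
    have h := hlc (n + 1) (by omega)
    simp only [Nat.add_sub_cancel] at h
    have h1 : (L (n+1)) ^ (2 * (n+1)) ≤ (L n) ^ (n+1) * (L (n+2)) ^ (n+1) := by
      calc (L (n+1)) ^ (2 * (n+1)) = ((L (n+1)) ^ 2) ^ (n+1) := by rw [pow_mul]
        _ ≤ (L n * L (n+2)) ^ (n+1) := pow_le_pow_left₀ (sq_nonneg _) h _
        _ = (L n) ^ (n+1) * (L (n+2)) ^ (n+1) := mul_pow _ _ _
    have h2 : (L n) ^ (n+1) * (L (n+2)) ^ (n+1) ≤ (L (n+1)) ^ n * (L (n+2)) ^ (n+1) :=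
      mul_le_mul_of_nonneg_right ih (pow_pos (hpos _) _).le
    have key : (L (n+1)) ^ (n+2) * (L (n+1)) ^ n ≤ (L (n+2)) ^ (n+1) * (L (n+1)) ^ n := by
      calc (L (n+1)) ^ (n+2) * (L (n+1)) ^ n = (L (n+1)) ^ (2 * (n+1)) := by
            rw [← pow_add]; ring_nf
        _ ≤ (L n) ^ (n+1) * (L (n+2)) ^ (n+1) := h1
        _ ≤ (L (n+1)) ^ n * (L (n+2)) ^ (n+1) := h2
        _ = (L (n+2)) ^ (n+1) * (L (n+1)) ^ n := by ring
    exact le_of_mul_le_mul_right key (pow_pos (hpos _) n)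

private lemma aux_rpow_pow (x : ℝ) (hx : 0 < x) (n m : ℕ) (hn : n ≠ 0) :
    (x ^ ((1 : ℝ) / n)) ^ (n * m) = x ^ m := by
  rw [← Real.rpow_natCast (x ^ ((1 : ℝ) / n)) (n * m), ← Real.rpow_mul hx.le,
    ← Real.rpow_natCast x m]
  congr 1
  have : (n : ℝ) ≠ 0 := Nat.cast_ne_zero.mpr hn
  push_cast
  field_simp

private lemma aux_rpow_mono (L : ℕ → ℝ) (hpos : ∀ k, 0 < L k) (hL0 : L 0 = 1)
    (hlc : ∀ k, 1 ≤ k → (L k) ^ 2 ≤ L (k - 1) * L (k + 1)) :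
    ∀ s k : ℕ, 1 ≤ s → s ≤ k → (L s) ^ ((1 : ℝ) / s) ≤ (L k) ^ ((1 : ℝ) / k) := by
  intro s k hs hsk
  induction k, hsk using Nat.le_induction with
  | base => exact le_rfl
  | succ n hn ih =>
    refine le_trans ih ?_
    have hn1 : 1 ≤ n := le_trans hs hn
    have ha : (0 : ℝ) < (L n) ^ ((1 : ℝ) / n) := Real.rpow_pos_of_pos (hpos n) _
    have hb : (0 : ℝ) < (L (n+1)) ^ ((1 : ℝ) / ((n+1 : ℕ) : ℝ)) := Real.rpow_pos_of_pos (hpos (n+1)) _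
    have hkey : ((L n) ^ ((1 : ℝ) / n)) ^ (n * (n+1)) ≤
        ((L (n+1)) ^ ((1 : ℝ) / (n+1 : ℕ))) ^ (n * (n+1)) := by
      rw [aux_rpow_pow (L n) (hpos n) n (n+1) (by omega),
        show n * (n+1) = (n+1) * n by ring,
        aux_rpow_pow (L (n+1)) (hpos (n+1)) (n+1) n (by omega)]
      exact aux_pow_mono L hpos hL0 hlc n
    have h := (pow_le_pow_iff_left₀ ha.le hb.le (Nat.mul_ne_zero (by omega) (by omega))).mp hkey
    exact_mod_cast h


private lemma aux_log_step (s : ℕ) (hs : 1 ≤ s) :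
    Real.log ((s : ℝ) + 1) - Real.log s ≤ 1 / s := by
  have hs0 : (0 : ℝ) < s := by exact_mod_cast hs
  have h := Real.log_le_sub_one_of_pos (show (0:ℝ) < ((s:ℝ)+1)/s by positivity)
  rw [Real.log_div (by positivity) (by positivity)] at h
  have : ((s:ℝ)+1)/s - 1 = 1/s := by field_simp; ring
  linarith

private lemma aux_harmonic (m : ℕ) (hm : 1 ≤ m) :
    ∀ k : ℕ, m ≤ k → Real.log ((k : ℝ) + 1) - Real.log m ≤ ∑ s ∈ Finset.Icc m k, (1 / (s : ℝ)) := by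
  intro k hk
  induction k, hk using Nat.le_induction with
  | base =>
    rw [Finset.Icc_self, Finset.sum_singleton]
    exact aux_log_step m hm
  | succ n hn ih =>
    rw [Finset.sum_Icc_succ_top (by omega : m ≤ n + 1)]
    have h2 := aux_log_step (n+1) (by omega)
    push_cast at h2 ⊢
    linarith

private lemma aux_fact_ge (k : ℕ) (hk : 1 ≤ k) :
    (k : ℝ) / Real.exp 1 ≤ (k.factorial : ℝ) ^ ((1 : ℝ) / k) := by
  have hk0 : (0 : ℝ) < k := by exact_mod_cast hk
  have hf0 : (0 : ℝ) < k.factorial := by exact_mod_cast k.factorial_pos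
  have h1 : ((k:ℝ)/Real.exp 1) ^ k ≤ (k.factorial : ℝ) := by
    have h := Real.pow_div_factorial_le_exp (k:ℝ) (le_of_lt hk0) k
    have hek : Real.exp (k : ℝ) = Real.exp 1 ^ k := by
      rw [← Real.exp_nat_mul]; norm_num
    rw [div_le_iff₀ hf0, hek] at h
    rw [div_pow, div_le_iff₀ (by positivity)]
    linarith
  have h2 := Real.rpow_le_rpow (by positivity) h1 (by positivity : (0:ℝ) ≤ 1/(k:ℝ))
  rwa [← Real.rpow_natCast ((k:ℝ)/Real.exp 1) k, ← Real.rpow_mul (by positivity),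
    mul_one_div, div_self (ne_of_gt hk0),
    Real.rpow_one] at h2

private lemma aux_fact_le (k : ℕ) (hk : 1 ≤ k) :
    (k.factorial : ℝ) ^ ((1 : ℝ) / k) ≤ k := by
  have hk0 : (0 : ℝ) < k := by exact_mod_cast hk
  have h1 : (k.factorial : ℝ) ≤ (k:ℝ) ^ k := by exact_mod_cast k.factorial_le_pow
  have h2 := Real.rpow_le_rpow (by positivity) h1 (by positivity : (0:ℝ) ≤ 1/(k:ℝ))
  rwa [← Real.rpow_natCast (k:ℝ) k, ← Real.rpow_mul (by positivity),
    mul_one_div, div_self (ne_of_gt hk0), Real.rpow_one] at h2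

theorem stmt14 (L : ℕ → ℝ) (hpos : ∀ k, 0 < L k) (hL0 : L 0 = 1) (hL1 : 1 ≤ L 1)
    (hlc : ∀ k, 1 ≤ k → (L k) ^ 2 ≤ L (k - 1) * L (k + 1))
    (hnq : Summable fun k : ℕ => 1 / (((k.factorial : ℝ) * L k) ^ ((1 : ℝ) / k))) :
    (∀ s k : ℕ, 1 ≤ s → s ≤ k →
      (((s.factorial : ℝ) * L s) ^ ((1 : ℝ) / s) / s) /
        (((k.factorial : ℝ) * L k) ^ ((1 : ℝ) / k) / k) ≤ 2 * Real.exp 1) ∧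
    ∃ B : ℝ, ∀ k : ℕ, 1 ≤ k →
      (k : ℝ) * Real.log k / (((k.factorial : ℝ) * L k) ^ ((1 : ℝ) / k)) ≤ B := by
  have hA : ∀ k : ℕ, (0:ℝ) < ((k.factorial : ℝ) * L k) ^ ((1 : ℝ) / k) := fun k =>
    Real.rpow_pos_of_pos (mul_pos (by exact_mod_cast k.factorial_pos) (hpos k)) _
  set A : ℕ → ℝ := fun k => ((k.factorial : ℝ) * L k) ^ ((1 : ℝ) / k) with hAdef
  have hAsplit : ∀ k : ℕ, A k = (k.factorial : ℝ) ^ ((1:ℝ)/k) * (L k) ^ ((1:ℝ)/k) :=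
    fun k => Real.mul_rpow (by positivity) (hpos k).le
  have hL1k : ∀ k : ℕ, 1 ≤ k → 1 ≤ (L k) ^ ((1:ℝ)/k) := by
    intro k hk
    have h := aux_rpow_mono L hpos hL0 hlc 1 k le_rfl hk
    have h1 : (L 1) ^ ((1:ℝ)/(1:ℕ)) = L 1 := by norm_num
    rw [h1] at h
    exact le_trans hL1 h
  -- key estimate : A s / s ≤ e * (A k / k)
  have key1 : ∀ s k : ℕ, 1 ≤ s → s ≤ k → A s / s ≤ Real.exp 1 * (A k / k) := by
    intro s k hs hsk
    have hk : 1 ≤ k := le_trans hs hsk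
    have hs0 : (0:ℝ) < s := by exact_mod_cast hs
    have hk0 : (0:ℝ) < k := by exact_mod_cast hk
    have h1 : A s / s ≤ (L s) ^ ((1:ℝ)/s) := by
      rw [div_le_iff₀ hs0, hAsplit s]
      exact mul_le_mul_of_nonneg_right (aux_fact_le s hs)
        (Real.rpow_nonneg (hpos s).le _) |>.trans_eq (mul_comm _ _)
    have h2 : (L s) ^ ((1:ℝ)/s) ≤ (L k) ^ ((1:ℝ)/k) := aux_rpow_mono L hpos hL0 hlc s k hs hsk
    have h3 : (L k) ^ ((1:ℝ)/k) ≤ Real.exp 1 * (A k / k) := by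
      have h4 : (k:ℝ)/Real.exp 1 * (L k) ^ ((1:ℝ)/k) ≤ A k := by
        rw [hAsplit k]
        exact mul_le_mul_of_nonneg_right (aux_fact_ge k hk) (Real.rpow_nonneg (hpos k).le _)
      rw [div_mul_eq_mul_div, div_le_iff₀ (Real.exp_pos 1)] at h4
      have he : Real.exp 1 * (A k / k) = A k * Real.exp 1 / k := by ring
      rw [he, le_div_iff₀ hk0]
      linarith [h4]
    linarith
  constructor
  · intro s k hs hsk
    have hk : 1 ≤ k := le_trans hs hsk
    have hk0 : (0:ℝ) < k := by exact_mod_cast hk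
    have hAk : (0:ℝ) < A k / k := div_pos (hA k) hk0
    rw [div_le_iff₀ hAk]
    calc A s / s ≤ Real.exp 1 * (A k / k) := key1 s k hs hsk
      _ ≤ 2 * Real.exp 1 * (A k / k) := by nlinarith [Real.exp_pos 1]
  · set f : ℕ → ℝ := fun k => 1 / A k with hfdef
    have hfnn : ∀ i : ℕ, 0 ≤ f i := fun i => le_of_lt (div_pos one_pos (hA i))
    set S : ℝ := ∑' k, f k with hSdef
    have hS0 : 0 ≤ S := tsum_nonneg hfnn
    have hlog2 : (0:ℝ) ≤ Real.log 2 := Real.log_nonneg one_le_two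
    refine ⟨Real.exp 1 * (2 * S + 2 * Real.log 2), ?_⟩
    intro k hk
    have hk0 : (0:ℝ) < k := by exact_mod_cast hk
    -- c = k / (e * A k)
    set c : ℝ := (k:ℝ) / (Real.exp 1 * A k) with hcdef
    have hc0 : 0 ≤ c := le_of_lt (div_pos hk0 (mul_pos (Real.exp_pos 1) (hA k)))
    have hc1 : c ≤ 1 := by
      rw [div_le_one (mul_pos (Real.exp_pos 1) (hA k))]
      have h4 : (k:ℝ)/Real.exp 1 * (L k) ^ ((1:ℝ)/k) ≤ A k := by
        rw [hAsplit k]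
        exact mul_le_mul_of_nonneg_right (aux_fact_ge k hk) (Real.rpow_nonneg (hpos k).le _)
      have h5 : (k:ℝ)/Real.exp 1 ≤ A k := by
        nlinarith [hL1k k hk, div_pos hk0 (Real.exp_pos 1)]
      rw [div_le_iff₀ (Real.exp_pos 1)] at h5
      linarith
    have hec : Real.exp 1 * c = (k:ℝ) / A k := by
      rw [hcdef, mul_div_assoc']
      exact mul_div_mul_left _ _ (Real.exp_ne_zero 1)
    have hgoal : (k:ℝ) * Real.log k / A k = Real.exp 1 * (c * Real.log k) := by
      rw [← mul_assoc, hec, div_mul_eq_mul_div]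
    rw [hgoal]
    apply mul_le_mul_of_nonneg_left _ (Real.exp_pos 1).le
    -- suffices c * log k ≤ 2 S + 2 log 2
    rcases eq_or_lt_of_le hk with h1 | hk2
    · simp [← h1]; positivity
    · -- k ≥ 2
      have hk2' : 2 ≤ k := hk2
      set m : ℕ := k.sqrt + 1 with hmdef
      have hm1 : 1 ≤ m := by omega
      have hmk : m ≤ k := Nat.sqrt_lt_self (by omega)
      have hm0 : (0:ℝ) < m := by exact_mod_cast hm1
      have hsum1 : ∑ s ∈ Finset.Icc m k, f s ≤ S := Summable.sum_le_tsum _ (fun i _ => hfnn i) hnq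
      have hterm : ∀ s ∈ Finset.Icc m k, c * (1/(s:ℝ)) ≤ f s := by
        intro s hs
        rw [Finset.mem_Icc] at hs
        have hs1 : 1 ≤ s := le_trans hm1 hs.1
        have hs0 : (0:ℝ) < s := by exact_mod_cast hs1
        have h6 := key1 s k hs1 hs.2
        have hAs : A s ≤ (s:ℝ) * (Real.exp 1 * (A k / k)) := by
          rw [← div_le_iff₀' hs0]; rw [div_eq_inv_mul] at *; linarith [h6]
        have h7 : 1 / ((s:ℝ) * (Real.exp 1 * (A k / k))) ≤ 1 / A s :=
          one_div_le_one_div_of_le (hA s) hAs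
        have h8 : c * (1/(s:ℝ)) = 1 / ((s:ℝ) * (Real.exp 1 * (A k / k))) := by
          rw [hcdef]
          field_simp
        rw [h8]
        exact h7
      have hsum2 : c * ∑ s ∈ Finset.Icc m k, (1/(s:ℝ)) ≤ S := by
        rw [Finset.mul_sum]
        exact le_trans (Finset.sum_le_sum hterm) hsum1
      have hharm := aux_harmonic m hm1 k hmk
      -- log m ≤ log 2 + log k / 2
      have hmle : (m:ℝ) ≤ 2 * Real.sqrt k := by
        have h9 : (k.sqrt : ℝ) ≤ Real.sqrt k := by
          rw [Real.le_sqrt (by positivity) (by positivity)]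
          exact_mod_cast Nat.sqrt_le' k
        have h10 : (1:ℝ) ≤ Real.sqrt k := Real.one_le_sqrt.mpr (by exact_mod_cast hk)
        rw [hmdef]; push_cast
        linarith
      have hlogm : Real.log m ≤ Real.log 2 + Real.log k / 2 := by
        calc Real.log m ≤ Real.log (2 * Real.sqrt k) := Real.log_le_log hm0 hmle
          _ = Real.log 2 + Real.log (Real.sqrt k) := Real.log_mul (by norm_num)
              (by positivity)
          _ = Real.log 2 + Real.log k / 2 := by rw [Real.log_sqrt hk0.le]
      have hlogk1 : Real.log k ≤ Real.log ((k:ℝ)+1) := Real.log_le_log hk0 (by linarith)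
      have hchain : c * (Real.log k / 2 - Real.log 2) ≤ S := by
        have h11 : Real.log k / 2 - Real.log 2 ≤ Real.log ((k:ℝ)+1) - Real.log m := by
          linarith
        calc c * (Real.log k / 2 - Real.log 2) ≤ c * (Real.log ((k:ℝ)+1) - Real.log m) :=
              mul_le_mul_of_nonneg_left h11 hc0
          _ ≤ c * ∑ s ∈ Finset.Icc m k, (1/(s:ℝ)) :=
              mul_le_mul_of_nonneg_left hharm hc0
          _ ≤ S := hsum2
      have hclog2 : c * Real.log 2 ≤ Real.log 2 := by nlinarith
      nlinarith [hchain, hclog2]
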